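/- McKean–Singer formula (finite-dimensional version): Let V and W be finite-dimensional complex inner product spaces and D : V → W linear with adjoint D*. Then for every t > 0, Tr(exp(−t·D*D)) − Tr(exp(−t·DD*)) = dim ker(D) − dim ker(D*). -/

import Mathlib

open NormedSpace

lemma comp_pow_succ {R V W : Type*} [CommRing R] [AddCommGroup V] [AddCommGroup W]
    [Module R V] [Module R W] (f : V →ₗ[R] W) (g : W →ₗ[R] V) (n : ℕ) :
    (g ∘ₗ f) ^ (n + 1) = g ∘ₗ (((f ∘ₗ g) ^ n) ∘ₗ f) := by
  induction n with
  | zero => simp [pow_succ, Module.End.mul_eq_comp, Module.End.one_eq_id]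
  | succ n ih =>
      rw [pow_succ, ih, pow_succ]
      simp [Module.End.mul_eq_comp, LinearMap.comp_assoc]

lemma trace_comp_pow {R V W : Type*} [CommRing R] [AddCommGroup V] [AddCommGroup W]
    [Module R V] [Module R W] [Module.Free R V] [Module.Finite R V]
    [Module.Free R W] [Module.Finite R W]
    (f : V →ₗ[R] W) (g : W →ₗ[R] V) (n : ℕ) :
    LinearMap.trace R V ((g ∘ₗ f) ^ (n + 1)) = LinearMap.trace R W ((f ∘ₗ g) ^ (n + 1)) := by
  rw [comp_pow_succ, LinearMap.trace_comp_comm', LinearMap.comp_assoc, ← Module.End.mul_eq_comp,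
    ← pow_succ]

lemma clm_coe_pow {R V : Type*} [NontriviallyNormedField R] [NormedAddCommGroup V]
    [NormedSpace R V] (C : V →L[R] V) (n : ℕ) :
    ((C ^ n : V →L[R] V) : V →ₗ[R] V) = (C : V →ₗ[R] V) ^ n :=
  map_pow (ContinuousLinearMap.toLinearMapRingHom) C n

lemma trace_exp_tsum {V : Type*} [NormedAddCommGroup V] [NormedSpace ℂ V]
    [FiniteDimensional ℂ V] (A : V →L[ℂ] V) :
    LinearMap.trace ℂ V ↑(exp A) =
      ∑' n : ℕ, (n.factorial : ℂ)⁻¹ • LinearMap.trace ℂ V ↑(A ^ n) := by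
  let φ : (V →L[ℂ] V) →L[ℂ] ℂ :=
    LinearMap.toContinuousLinearMap ((LinearMap.trace ℂ V) ∘ₗ (ContinuousLinearMap.coeLM ℂ))
  have hφ : ∀ B : V →L[ℂ] V, φ B = LinearMap.trace ℂ V ↑B := fun B => rfl
  rw [← hφ, exp_eq_tsum ℂ, φ.map_tsum (expSeries_summable' (𝕂 := ℂ) A)]
  simp [hφ]

lemma summable_trace_exp {V : Type*} [NormedAddCommGroup V] [NormedSpace ℂ V]
    [FiniteDimensional ℂ V] (A : V →L[ℂ] V) :
    Summable fun n : ℕ => (n.factorial : ℂ)⁻¹ • LinearMap.trace ℂ V ↑(A ^ n) := by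
  let φ : (V →L[ℂ] V) →L[ℂ] ℂ :=
    LinearMap.toContinuousLinearMap ((LinearMap.trace ℂ V) ∘ₗ (ContinuousLinearMap.coeLM ℂ))
  have hφ : ∀ B : V →L[ℂ] V, φ B = LinearMap.trace ℂ V ↑B := fun B => rfl
  have h2 := (expSeries_summable' (𝕂 := ℂ) A).map φ φ.continuous
  simpa [Function.comp_def, map_smul, hφ] using h2

theorem mckean_singer_finite_dim
    {V W : Type*} [NormedAddCommGroup V] [InnerProductSpace ℂ V]
    [NormedAddCommGroup W] [InnerProductSpace ℂ W]
    [FiniteDimensional ℂ V] [FiniteDimensional ℂ W]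
    (D : V →L[ℂ] W) (t : ℝ) (ht : 0 < t) :
    LinearMap.trace ℂ V ↑(exp ((-(t : ℂ)) • (ContinuousLinearMap.adjoint D ∘L D))) -
      LinearMap.trace ℂ W ↑(exp ((-(t : ℂ)) • (D ∘L ContinuousLinearMap.adjoint D))) =
    (Module.finrank ℂ (LinearMap.ker (D : V →ₗ[ℂ] W)) : ℂ) -
      (Module.finrank ℂ (LinearMap.ker (ContinuousLinearMap.adjoint D : W →ₗ[ℂ] V)) : ℂ) := by
  classical
  set Ds := ContinuousLinearMap.adjoint D with hDs
  set a : ℕ → ℂ := fun n => (n.factorial : ℂ)⁻¹ •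
      LinearMap.trace ℂ V ↑(((-(t : ℂ)) • (Ds ∘L D)) ^ n) with ha
  set b : ℕ → ℂ := fun n => (n.factorial : ℂ)⁻¹ •
      LinearMap.trace ℂ W ↑(((-(t : ℂ)) • (D ∘L Ds)) ^ n) with hb
  have hA := trace_exp_tsum ((-(t : ℂ)) • (Ds ∘L D))
  have hB := trace_exp_tsum ((-(t : ℂ)) • (D ∘L Ds))
  have hSa : Summable a := summable_trace_exp _
  have hSb : Summable b := summable_trace_exp _
  have key : ∀ n : ℕ, n ≠ 0 → a n = b n := by
    intro n hn
    obtain ⟨m, rfl⟩ := Nat.exists_eq_succ_of_ne_zero hn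
    simp only [ha, hb]
    congr 1
    rw [smul_pow, smul_pow, ContinuousLinearMap.coe_smul, ContinuousLinearMap.coe_smul,
      map_smul, map_smul, clm_coe_pow, clm_coe_pow, ContinuousLinearMap.toLinearMap_comp,
      ContinuousLinearMap.toLinearMap_comp, trace_comp_pow]
  have hsum : (∑' n, a n) - (∑' n, b n) = a 0 - b 0 := by
    rw [← hSa.tsum_sub hSb]
    rw [tsum_eq_single 0 (fun n hn => by rw [key n hn, sub_self])]
  have ha0 : a 0 = (Module.finrank ℂ V : ℂ) := by
    simp [ha, clm_coe_pow, LinearMap.trace_one]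
  have hb0 : b 0 = (Module.finrank ℂ W : ℂ) := by
    simp [hb, clm_coe_pow, LinearMap.trace_one]
  rw [hA, hB, hsum, ha0, hb0]
  have hkerDs : LinearMap.ker (Ds : W →ₗ[ℂ] V) = (LinearMap.range (D : V →ₗ[ℂ] W))ᗮ := by
    ext x
    simp only [LinearMap.mem_ker, Submodule.mem_orthogonal, ContinuousLinearMap.coe_coe]
    constructor
    · rintro hx _ ⟨y, rfl⟩
      rw [ContinuousLinearMap.coe_coe, ← ContinuousLinearMap.adjoint_inner_right, ← hDs, hx,
        inner_zero_right]
    · intro hx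
      have h := hx (D (Ds x)) ⟨Ds x, rfl⟩
      rw [← ContinuousLinearMap.adjoint_inner_right, ← hDs] at h
      exact inner_self_eq_zero.mp h
  have h1 : Module.finrank ℂ (LinearMap.range (D : V →ₗ[ℂ] W)) + Module.finrank ℂ (LinearMap.ker (D : V →ₗ[ℂ] W))
      = Module.finrank ℂ V := LinearMap.finrank_range_add_finrank_ker (D : V →ₗ[ℂ] W)
  have h2 : Module.finrank ℂ (LinearMap.range (D : V →ₗ[ℂ] W)) + Module.finrank ℂ (LinearMap.ker (Ds : W →ₗ[ℂ] V))
      = Module.finrank ℂ W := by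
    rw [hkerDs]
    exact Submodule.finrank_add_finrank_orthogonal _
  have h1' : (Module.finrank ℂ V : ℂ) =
      (Module.finrank ℂ (LinearMap.range (D : V →ₗ[ℂ] W)) : ℂ) + (Module.finrank ℂ (LinearMap.ker (D : V →ₗ[ℂ] W)) : ℂ) := by
    exact_mod_cast h1.symm
  have h2' : (Module.finrank ℂ W : ℂ) =
      (Module.finrank ℂ (LinearMap.range (D : V →ₗ[ℂ] W)) : ℂ) + (Module.finrank ℂ (LinearMap.ker (Ds : W →ₗ[ℂ] V)) : ℂ) := by
    exact_mod_cast h2.symm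
  rw [h1', h2']
  ring
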